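/- For any synchronizing automaton 𝒜 with n ≥ 2 states, Fr(𝒜) ≤ min{Rnk(ℐ_i) : i ∈ [1,k]}. Moreover, if Fs(𝒜) ∖ Rad(𝒜) ≠ ∅, then min{Rnk(ℐ_i) : i ∈ [1,k]} = Fr(𝒜). -/

import Mathlib

open scoped BigOperators

set_option synthInstance.maxHeartbeats 1000000
set_option maxHeartbeats 1000000

noncomputable section

/-- Action of a word on a state: `q · u`. -/
def actW {Q A : Type*} (δ : Q → A → Q) (q : Q) (u : List A) : Q :=
  u.foldl δ q

/-- The image `Q · u` of the full state set under a word. -/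
def imageSet {Q A : Type*} [Fintype Q] [DecidableEq Q] (δ : Q → A → Q) (u : List A) :
    Finset Q :=
  Finset.image (fun q => actW δ q u) Finset.univ

/-- The rank `rk(u) = |Q · u|` of a word. -/
def wordRank {Q A : Type*} [Fintype Q] [DecidableEq Q] (δ : Q → A → Q) (u : List A) : ℕ :=
  (imageSet δ u).card

/-- A word is reset (synchronizing) if `|Q · u| = 1`. -/
def IsReset {Q A : Type*} [Fintype Q] [DecidableEq Q] (δ : Q → A → Q) (u : List A) : Prop :=
  wordRank δ u = 1

/-- The automaton is synchronizing if it admits a reset word. -/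
def IsSynchronizing {Q A : Type*} [Fintype Q] [DecidableEq Q] (δ : Q → A → Q) : Prop :=
  ∃ u : List A, IsReset δ u

/-- `Syn(𝒜)`, the set of reset words. -/
def SynWords {Q A : Type*} [Fintype Q] [DecidableEq Q] (δ : Q → A → Q) : Set (List A) :=
  {u | IsReset δ u}

/-- The hyperplane `w⊥ = {v ∈ ℂQ : ∑ q, v q = 0}`. -/
def Wperp (Q : Type*) [Fintype Q] : Submodule ℂ (Q → ℂ) :=
  LinearMap.ker (∑ q : Q, (LinearMap.proj q : (Q → ℂ) →ₗ[ℂ] ℂ))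

theorem mem_Wperp {Q : Type*} [Fintype Q] (v : Q → ℂ) :
    v ∈ Wperp Q ↔ ∑ q : Q, v q = 0 := by
  simp [Wperp, LinearMap.mem_ker, LinearMap.sum_apply]

/-- The (right) action of a word on row vectors `v ↦ v·π(u)`. -/
def piLin {Q A : Type*} [Fintype Q] [DecidableEq Q] (δ : Q → A → Q) (u : List A) :
    (Q → ℂ) →ₗ[ℂ] (Q → ℂ) where
  toFun v := fun p => ∑ q ∈ Finset.univ.filter (fun q => actW δ q u = p), v q
  map_add' := by
    intro a b; funext p; simp [Finset.sum_add_distrib]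
  map_smul' := by
    intro c v; funext p; simp [Finset.mul_sum]

theorem piLin_mem {Q A : Type*} [Fintype Q] [DecidableEq Q] (δ : Q → A → Q) (u : List A) :
    ∀ v ∈ Wperp Q, piLin δ u v ∈ Wperp Q := by
  intro v hv
  rw [mem_Wperp] at hv ⊢
  have h := Finset.sum_fiberwise (Finset.univ : Finset Q) (fun q => actW δ q u) v
  calc ∑ p : Q, piLin δ u v p
      = ∑ p : Q, ∑ q ∈ Finset.univ.filter (fun q => actW δ q u = p), v q := rfl
    _ = ∑ q : Q, v q := h
    _ = 0 := hv

/-- The endomorphism of `w⊥` induced by a word. -/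
def rhoEnd {Q A : Type*} [Fintype Q] [DecidableEq Q] (δ : Q → A → Q) (u : List A) :
    Module.End ℂ (Wperp Q) :=
  (piLin δ u).restrict (piLin_mem δ u)

/-- The representation `ρ : Σ* → End(w⊥)`; we record it in the multiplicative opposite so
that `ρ (u ++ v) = ρ u * ρ v` (the paper's right-action convention). -/
def rho {Q A : Type*} [Fintype Q] [DecidableEq Q] (δ : Q → A → Q) (u : List A) :
    (Module.End ℂ (Wperp Q))ᵐᵒᵖ :=
  MulOpposite.op (rhoEnd δ u)

/-- `ℛ`, the ℂ-subalgebra generated by `ρ(Σ*)`. -/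
def Ralg {Q A : Type*} [Fintype Q] [DecidableEq Q] (δ : Q → A → Q) :
    Subalgebra ℂ (Module.End ℂ (Wperp Q))ᵐᵒᵖ :=
  Algebra.adjoin ℂ (Set.range (rho δ))

/-- `ρ(u)` seen as an element of `ℛ`. -/
def rhoR {Q A : Type*} [Fintype Q] [DecidableEq Q] (δ : Q → A → Q) (u : List A) :
    Ralg δ :=
  ⟨rho δ u, Algebra.subset_adjoin (Set.mem_range_self u)⟩

/-- The Jacobson radical `Rad(ℛ)` of `ℛ`, realised as a subset of the ambient algebra via
the standard characterisation: `x ∈ Rad(ℛ)` iff `x ∈ ℛ` and for every `y ∈ ℛ` the element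
`1 - y * x` is left-invertible in `ℛ`. -/
def RadSet {Q A : Type*} [Fintype Q] [DecidableEq Q] (δ : Q → A → Q) :
    Set (Module.End ℂ (Wperp Q))ᵐᵒᵖ :=
  {x | x ∈ Ralg δ ∧ ∀ y ∈ Ralg δ, ∃ z ∈ Ralg δ, z * (1 - y * x) = 1}

/-- `Rad(𝒜)`: the set of radical words, i.e. words `u` with `ρ(u) ∈ Rad(ℛ)`. -/
def RadWords {Q A : Type*} [Fintype Q] [DecidableEq Q] (δ : Q → A → Q) : Set (List A) :=
  {u | rho δ u ∈ RadSet δ}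

/-- The automaton is semisimple when `Rad(𝒜) = Syn(𝒜)`. -/
def IsSemisimple {Q A : Type*} [Fintype Q] [DecidableEq Q] (δ : Q → A → Q) : Prop :=
  RadWords δ = SynWords δ

/-- The `t`-packing number `D(t,r,n)`: the maximum size of a family of `r`-subsets of an
`n`-set in which every `t`-subset is contained in at most one member. -/
def packingNumber (t r n : ℕ) : ℕ :=
  sSup {m | ∃ F : Finset (Finset (Fin n)), F.card = m ∧ (∀ S ∈ F, S.card = r) ∧
    ∀ T : Finset (Fin n), T.card = t → (F.filter fun S => T ⊆ S).card ≤ 1}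

/-- The former-rank `Fr(𝒜)`: the least rank of a non-reset word. -/
def formerRank {Q A : Type*} [Fintype Q] [DecidableEq Q] (δ : Q → A → Q) : ℕ :=
  sInf {m | ∃ u : List A, ¬ IsReset δ u ∧ wordRank δ u = m}

/-- `Fs(𝒜)`: the set of former-synchronizing words. -/
def Fs {Q A : Type*} [Fintype Q] [DecidableEq Q] (δ : Q → A → Q) : Set (List A) :=
  {u | wordRank δ u = formerRank δ}

/-- `θ_i(u)`: the image of `ρ(u)` in the `i`-th Wedderburn–Artin matrix component, where
`e : ℛ → ∏ i, M_{n_i}(ℂ)` is the quotient map `ψ` followed by the fixed isomorphism. -/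
def theta {Q A : Type*} [Fintype Q] [DecidableEq Q] (δ : Q → A → Q) {k : ℕ} {nn : Fin k → ℕ}
    (e : Ralg δ →ₐ[ℂ] ∀ i : Fin k, Matrix (Fin (nn i)) (Fin (nn i)) ℂ)
    (u : List A) (i : Fin k) : Matrix (Fin (nn i)) (Fin (nn i)) ℂ :=
  e (rhoR δ u) i

/-- `supp(v) = {i : θ_i(v) ≠ 0}`. -/
def suppW {Q A : Type*} [Fintype Q] [DecidableEq Q] (δ : Q → A → Q) {k : ℕ} {nn : Fin k → ℕ}
    (e : Ralg δ →ₐ[ℂ] ∀ i : Fin k, Matrix (Fin (nn i)) (Fin (nn i)) ℂ)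
    (v : List A) : Set (Fin k) :=
  {i | theta δ e v i ≠ 0}

/-- `u ∈ Σ* v Σ*`, i.e. `v` is a factor of `u`. -/
def InFactor {A : Type*} (v u : List A) : Prop :=
  ∃ a b : List A, u = a ++ v ++ b

/-- `u` is a `v`-minimal word: `u ∈ Σ*vΣ*`, `supp(u)` is nonempty, and `supp(u)` is minimal
among the nonempty supports of words in `Σ*vΣ*`. -/
def IsVMinimal {Q A : Type*} [Fintype Q] [DecidableEq Q] (δ : Q → A → Q) {k : ℕ}
    {nn : Fin k → ℕ}
    (e : Ralg δ →ₐ[ℂ] ∀ i : Fin k, Matrix (Fin (nn i)) (Fin (nn i)) ℂ)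
    (v u : List A) : Prop :=
  InFactor v u ∧ (suppW δ e u).Nonempty ∧
    ∀ z : List A, InFactor v z → suppW δ e z ⊆ suppW δ e u →
      suppW δ e z = ∅ ∨ suppW δ e z = suppW δ e u

/-- The `i`-th factor monoid `ℳ_i = θ_i(Σ*)`. -/
def factorMonoid {Q A : Type*} [Fintype Q] [DecidableEq Q] (δ : Q → A → Q) {k : ℕ}
    {nn : Fin k → ℕ}
    (e : Ralg δ →ₐ[ℂ] ∀ i : Fin k, Matrix (Fin (nn i)) (Fin (nn i)) ℂ)
    (i : Fin k) : Set (Matrix (Fin (nn i)) (Fin (nn i)) ℂ) :=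
  Set.range fun u : List A => theta δ e u i

/-- A two-sided ideal of the (sub)monoid `M`. -/
def IsSetIdeal {X : Type*} [Mul X] (M I : Set X) : Prop :=
  I ⊆ M ∧ ∀ a ∈ M, ∀ x ∈ I, a * x ∈ I ∧ x * a ∈ I

/-- `I` is a `0`-minimal (two-sided) ideal of the monoid `M`. -/
def IsZeroMinimalIdeal {X : Type*} [Mul X] [Zero X] (M I : Set X) : Prop :=
  IsSetIdeal M I ∧ (0 : X) ∈ I ∧ I ≠ {0} ∧
    ∀ J : Set X, IsSetIdeal M J → (0 : X) ∈ J → J ⊆ I → J ≠ {0} → J = I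

/-- `Rnk_i(g) = min {rk(u) : θ_i(u) = g}`. -/
def rnkElt {Q A : Type*} [Fintype Q] [DecidableEq Q] (δ : Q → A → Q) {k : ℕ}
    {nn : Fin k → ℕ}
    (e : Ralg δ →ₐ[ℂ] ∀ i : Fin k, Matrix (Fin (nn i)) (Fin (nn i)) ℂ)
    (i : Fin k) (g : Matrix (Fin (nn i)) (Fin (nn i)) ℂ) : ℕ :=
  sInf {m | ∃ u : List A, theta δ e u i = g ∧ wordRank δ u = m}

/-- `Rnk(ℐ_i) = min {Rnk_i(g) : g ∈ ℐ_i ∖ {0}}`. -/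
def rnkIdeal {Q A : Type*} [Fintype Q] [DecidableEq Q] (δ : Q → A → Q) {k : ℕ}
    {nn : Fin k → ℕ}
    (e : Ralg δ →ₐ[ℂ] ∀ i : Fin k, Matrix (Fin (nn i)) (Fin (nn i)) ℂ)
    (i : Fin k) (I : Set (Matrix (Fin (nn i)) (Fin (nn i)) ℂ)) : ℕ :=
  sInf {m | ∃ g ∈ I, g ≠ 0 ∧ rnkElt δ e i g = m}

/-- `w` `u`-represents `g`: `w ∈ Σ*uΣ*`, `θ_i(w) = g`, and either `g = 0` or `rk(w)` is
minimum among all words with the first two properties. -/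
def URepresents {Q A : Type*} [Fintype Q] [DecidableEq Q] (δ : Q → A → Q) {k : ℕ}
    {nn : Fin k → ℕ}
    (e : Ralg δ →ₐ[ℂ] ∀ i : Fin k, Matrix (Fin (nn i)) (Fin (nn i)) ℂ)
    (u : List A) (i : Fin k) (w : List A) (g : Matrix (Fin (nn i)) (Fin (nn i)) ℂ) : Prop :=
  InFactor u w ∧ theta δ e w i = g ∧
    (g = 0 ∨ ∀ w' : List A, InFactor u w' → theta δ e w' i = g → wordRank δ w ≤ wordRank δ w')

/-- The relation `σ_i` on `ℐ_i`. -/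
def sigmaRel {Q A : Type*} [Fintype Q] [DecidableEq Q] (δ : Q → A → Q) {k : ℕ}
    {nn : Fin k → ℕ}
    (e : Ralg δ →ₐ[ℂ] ∀ i : Fin k, Matrix (Fin (nn i)) (Fin (nn i)) ℂ)
    (i : Fin k) (u : List A)
    (g f : Matrix (Fin (nn i)) (Fin (nn i)) ℂ) : Prop :=
  g = f ∨ ∃ w₁ w₂ : List A, URepresents δ e u i w₁ g ∧ URepresents δ e u i w₂ f ∧
    1 < (imageSet δ w₁ ∩ imageSet δ w₂).card

/-- `T ⊆ [1,k]` is a core. -/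
def IsCore {Q A : Type*} [Fintype Q] [DecidableEq Q] (δ : Q → A → Q) {k : ℕ}
    {nn : Fin k → ℕ}
    (e : Ralg δ →ₐ[ℂ] ∀ i : Fin k, Matrix (Fin (nn i)) (Fin (nn i)) ℂ)
    (T : Set (Fin k)) : Prop :=
  ∀ x : List A, (∀ i ∈ T, theta δ e x i = 0) → ∀ i : Fin k, theta δ e x i = 0

/-- A minimal core. -/
def IsMinimalCore {Q A : Type*} [Fintype Q] [DecidableEq Q] (δ : Q → A → Q) {k : ℕ}
    {nn : Fin k → ℕ}
    (e : Ralg δ →ₐ[ℂ] ∀ i : Fin k, Matrix (Fin (nn i)) (Fin (nn i)) ℂ)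
    (T : Set (Fin k)) : Prop :=
  IsCore δ e T ∧ ∀ T' : Set (Fin k), T' ⊆ T → IsCore δ e T' → T' = T

/-- An automaton congruence. -/
def IsCongruence {Q A : Type*} (δ : Q → A → Q) (σ : Q → Q → Prop) : Prop :=
  Equivalence σ ∧ ∀ q p : Q, σ q p → ∀ u : List A, σ (actW δ q u) (actW δ p u)

/-- A simple automaton: the only congruences are the identity and the universal relation. -/
def IsSimple {Q A : Type*} (δ : Q → A → Q) : Prop :=
  ∀ σ : Q → Q → Prop, IsCongruence δ σ → σ = Eq ∨ σ = fun _ _ => True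


section Aux

variable {Q A : Type*} [Fintype Q] [DecidableEq Q] (δ : Q → A → Q)

theorem actW_append (q : Q) (u v : List A) :
    actW δ q (u ++ v) = actW δ (actW δ q u) v :=
  List.foldl_append

theorem piLin_apply (u : List A) (v : Q → ℂ) (p : Q) :
    piLin δ u v p = ∑ q ∈ Finset.univ.filter (fun q => actW δ q u = p), v q := rfl

theorem piLin_append (u v : List A) :
    piLin δ (u ++ v) = (piLin δ v) ∘ₗ (piLin δ u) := by
  classical
  apply LinearMap.ext; intro x; funext p
  rw [LinearMap.comp_apply, piLin_apply, piLin_apply]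
  have := Finset.sum_fiberwise_eq_sum_filter Finset.univ
    (Finset.univ.filter (fun r => actW δ r v = p)) (fun q => actW δ q u) x
  calc ∑ q ∈ Finset.univ.filter (fun q => actW δ q (u ++ v) = p), x q
      = ∑ q ∈ Finset.univ.filter (fun q => (fun q => actW δ q u) q ∈
          Finset.univ.filter (fun r => actW δ r v = p)), x q := by
        apply Finset.sum_congr _ (fun _ _ => rfl)
        ext q; simp [actW_append]
    _ = ∑ r ∈ Finset.univ.filter (fun r => actW δ r v = p),
          ∑ q ∈ Finset.univ.filter (fun q => actW δ q u = r), x q := this.symm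
    _ = ∑ r ∈ Finset.univ.filter (fun r => actW δ r v = p), piLin δ u x r := rfl

theorem rhoEnd_append (u v : List A) :
    rhoEnd δ (u ++ v) = rhoEnd δ v * rhoEnd δ u := by
  apply LinearMap.ext; intro x
  apply Subtype.ext
  show piLin δ (u ++ v) x.val = _
  rw [piLin_append]
  rfl

theorem rhoR_append (u v : List A) :
    rhoR δ (u ++ v) = rhoR δ u * rhoR δ v := by
  apply Subtype.ext
  show rho δ (u ++ v) = rho δ u * rho δ v
  unfold rho
  rw [rhoEnd_append, MulOpposite.op_mul]

theorem theta_append {k : ℕ} {nn : Fin k → ℕ}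
    (e : Ralg δ →ₐ[ℂ] ∀ i : Fin k, Matrix (Fin (nn i)) (Fin (nn i)) ℂ)
    (u v : List A) (i : Fin k) :
    theta δ e (u ++ v) i = theta δ e u i * theta δ e v i := by
  unfold theta
  rw [rhoR_append, map_mul]
  rfl

theorem rhoR_eq_zero_of_reset (u : List A) (h : IsReset δ u) : rhoR δ u = 0 := by
  obtain ⟨q0, hq0⟩ := Finset.card_eq_one.mp h
  have hact : ∀ q : Q, actW δ q u = q0 := by
    intro q
    have hm : actW δ q u ∈ imageSet δ u := Finset.mem_image_of_mem _ (Finset.mem_univ q)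
    rw [hq0] at hm
    simpa using hm
  apply Subtype.ext
  show MulOpposite.op (rhoEnd δ u) = 0
  have hend : rhoEnd δ u = 0 := by
    apply LinearMap.ext; intro x
    apply Subtype.ext
    show piLin δ u x.val = 0
    funext p
    rw [piLin_apply]
    by_cases hp : p = q0
    · have hf : Finset.univ.filter (fun q => actW δ q u = p) = Finset.univ := by
        ext q; simp [hact, hp]
      rw [hf]
      exact (mem_Wperp _).mp x.2
    · have hf : Finset.univ.filter (fun q => actW δ q u = p) = ∅ := by
        ext q
        simp only [Finset.mem_filter, Finset.mem_univ, true_and, hact,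
          Finset.notMem_empty, iff_false]
        exact fun hh => hp hh.symm
      simp [hf]
  rw [hend]
  rfl

theorem theta_eq_zero_of_reset {k : ℕ} {nn : Fin k → ℕ}
    (e : Ralg δ →ₐ[ℂ] ∀ i : Fin k, Matrix (Fin (nn i)) (Fin (nn i)) ℂ)
    (u : List A) (h : IsReset δ u) (i : Fin k) : theta δ e u i = 0 := by
  unfold theta
  rw [rhoR_eq_zero_of_reset δ u h, map_zero]
  rfl

theorem imageSet_append (u v : List A) :
    imageSet δ (u ++ v) = Finset.image (fun q => actW δ q v) (imageSet δ u) := by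
  ext p
  simp [imageSet, actW_append]

theorem wordRank_append_le_left (u v : List A) :
    wordRank δ (u ++ v) ≤ wordRank δ u := by
  unfold wordRank
  rw [imageSet_append]
  exact Finset.card_image_le

theorem wordRank_append_le_right (u v : List A) :
    wordRank δ (u ++ v) ≤ wordRank δ v := by
  unfold wordRank
  apply Finset.card_le_card
  rw [imageSet_append]
  intro p hp
  obtain ⟨q, _, rfl⟩ := Finset.mem_image.mp hp
  exact Finset.mem_image_of_mem _ (Finset.mem_univ q)

theorem theta_congr {k : ℕ} {nn : Fin k → ℕ}
    (e : Ralg δ →ₐ[ℂ] ∀ i : Fin k, Matrix (Fin (nn i)) (Fin (nn i)) ℂ)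
    (u u' : List A) (h : ∀ q, actW δ q u = actW δ q u') (i : Fin k) :
    theta δ e u i = theta δ e u' i := by
  have hr : rhoR δ u = rhoR δ u' := by
    apply Subtype.ext
    show MulOpposite.op (rhoEnd δ u) = MulOpposite.op (rhoEnd δ u')
    congr 1
    apply LinearMap.ext; intro x
    apply Subtype.ext
    show piLin δ u x.val = piLin δ u' x.val
    funext p
    rw [piLin_apply, piLin_apply]
    apply Finset.sum_congr _ (fun _ _ => rfl)
    ext q; simp [h]
  unfold theta
  rw [hr]

theorem factorMonoid_finite {k : ℕ} {nn : Fin k → ℕ}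
    (e : Ralg δ →ₐ[ℂ] ∀ i : Fin k, Matrix (Fin (nn i)) (Fin (nn i)) ℂ)
    (i : Fin k) : (factorMonoid δ e i).Finite := by
  classical
  have hsub : factorMonoid δ e i ⊆ Set.range (fun f : Q → Q =>
      if h : ∃ u : List A, (fun q => actW δ q u) = f then theta δ e h.choose i else 0) := by
    rintro _ ⟨u, rfl⟩
    refine ⟨fun q => actW δ q u, ?_⟩
    dsimp only
    rw [dif_pos (⟨u, rfl⟩ : ∃ w : List A, (fun q => actW δ q w) = fun q => actW δ q u)]
    apply theta_congr
    intro q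
    exact congrFun (⟨u, rfl⟩ : ∃ w : List A,
      (fun q => actW δ q w) = fun q => actW δ q u).choose_spec q
  exact (Set.finite_range _).subset hsub

theorem exists_ne_zero_of_ne_singleton {X : Type*} [Zero X] (I : Set X)
    (h0 : (0 : X) ∈ I) (hne : I ≠ {0}) : ∃ g ∈ I, g ≠ 0 := by
  by_contra h
  push_neg at h
  apply hne
  apply Set.Subset.antisymm
  · intro x hx
    simp [h x hx]
  · intro x hx
    simp only [Set.mem_singleton_iff] at hx
    rw [hx]; exact h0

theorem exists_zeroMinimal {X : Type*} [Mul X] [Zero X] (M J : Set X)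
    (hfin : J.Finite) (hJ : IsSetIdeal M J) (h0 : (0 : X) ∈ J) (hne : J ≠ {0}) :
    ∃ K, K ⊆ J ∧ IsZeroMinimalIdeal M K := by
  have hS : ({n | ∃ K : Set X, (IsSetIdeal M K ∧ (0:X) ∈ K ∧ K ≠ {0} ∧ K ⊆ J) ∧ K.ncard = n}
      : Set ℕ).Nonempty := ⟨J.ncard, J, ⟨hJ, h0, hne, subset_rfl⟩, rfl⟩
  obtain ⟨K, ⟨hKid, hK0, hKne, hKJ⟩, hKcard⟩ := Nat.sInf_mem hS
  refine ⟨K, hKJ, hKid, hK0, hKne, ?_⟩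
  intro J' hJ'id h0' hsub hne'
  have hfinK : K.Finite := hfin.subset hKJ
  have hle : K.ncard ≤ J'.ncard := by
    rw [hKcard]
    exact Nat.sInf_le ⟨J', ⟨hJ'id, h0', hne', hsub.trans hKJ⟩, rfl⟩
  exact Set.eq_of_subset_of_ncard_le hsub hle hfinK

end Aux

theorem stmt16 {Q A : Type*} [Fintype Q] [DecidableEq Q] (δ : Q → A → Q)
    {k : ℕ} {nn : Fin k → ℕ}
    (e : Ralg δ →ₐ[ℂ] ∀ i : Fin k, Matrix (Fin (nn i)) (Fin (nn i)) ℂ)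
    (he_surj : Function.Surjective e)
    (he_ker : ∀ x : Ralg δ, e x = 0 ↔ (x : (Module.End ℂ (Wperp Q))ᵐᵒᵖ) ∈ RadSet δ)
    (Ii : ∀ i : Fin k, Set (Matrix (Fin (nn i)) (Fin (nn i)) ℂ))
    (hIi : ∀ i : Fin k, IsZeroMinimalIdeal (factorMonoid δ e i) (Ii i))
    (hIuniq : ∀ (i : Fin k) (J : Set (Matrix (Fin (nn i)) (Fin (nn i)) ℂ)),
      IsZeroMinimalIdeal (factorMonoid δ e i) J → J = Ii i)
    (hk : 0 < k) (hn : 2 ≤ Fintype.card Q) (hsync : IsSynchronizing δ) :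
    formerRank δ ≤ sInf (Set.range fun i : Fin k => rnkIdeal δ e i (Ii i)) ∧
      ((Fs δ \ RadWords δ).Nonempty →
        sInf (Set.range fun i : Fin k => rnkIdeal δ e i (Ii i)) = formerRank δ) := by
  classical
  -- Part 1 core: formerRank ≤ rnkIdeal i for each i
  have part1core : ∀ i : Fin k, formerRank δ ≤ rnkIdeal δ e i (Ii i) := by
    intro i
    obtain ⟨g, hgI, hg0⟩ := exists_ne_zero_of_ne_singleton (Ii i) (hIi i).2.1 (hIi i).2.2.1
    have hT : ({m | ∃ g ∈ Ii i, g ≠ 0 ∧ rnkElt δ e i g = m} : Set ℕ).Nonempty :=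
      ⟨rnkElt δ e i g, g, hgI, hg0, rfl⟩
    obtain ⟨g', hg'I, hg'0, hg'⟩ := Nat.sInf_mem hT
    have hIdeq : rnkIdeal δ e i (Ii i) = rnkElt δ e i g' := hg'.symm
    -- g' ∈ factorMonoid, so some word maps to it
    obtain ⟨u0, hu0⟩ := (hIi i).1.1 hg'I
    have hS : ({m | ∃ u : List A, theta δ e u i = g' ∧ wordRank δ u = m} : Set ℕ).Nonempty :=
      ⟨wordRank δ u0, u0, hu0, rfl⟩
    obtain ⟨u', hu'θ, hu'r⟩ := Nat.sInf_mem hS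
    have hnr : ¬ IsReset δ u' := by
      intro hres
      exact hg'0 (hu'θ ▸ theta_eq_zero_of_reset δ e u' hres i)
    have h1 : formerRank δ ≤ wordRank δ u' := Nat.sInf_le ⟨u', hnr, rfl⟩
    rw [hIdeq]
    calc formerRank δ ≤ wordRank δ u' := h1
      _ = rnkElt δ e i g' := hu'r
  have hrangene : (Set.range fun i : Fin k => rnkIdeal δ e i (Ii i)).Nonempty :=
    ⟨_, ⟨⟨0, hk⟩, rfl⟩⟩
  obtain ⟨i0, hi0⟩ := Nat.sInf_mem hrangene
  have part1 : formerRank δ ≤ sInf (Set.range fun i : Fin k => rnkIdeal δ e i (Ii i)) := by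
    rw [← hi0]; exact part1core i0
  refine ⟨part1, ?_⟩
  rintro ⟨u, huFs, huRad⟩
  have hur : wordRank δ u = formerRank δ := huFs
  -- there is i with theta u i ≠ 0
  have hene : e (rhoR δ u) ≠ 0 := by
    intro h
    exact huRad ((he_ker (rhoR δ u)).mp h)
  have hex : ∃ i : Fin k, theta δ e u i ≠ 0 := by
    by_contra h
    push_neg at h
    exact hene (funext h)
  obtain ⟨i, hθu⟩ := hex
  -- wordRank u ≥ 1
  have hQne : (Finset.univ : Finset Q).Nonempty := by
    rw [← Finset.card_pos, Finset.card_univ]; omega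
  have hr1 : 1 ≤ wordRank δ u := by
    have : 0 < (imageSet δ u).card := Finset.card_pos.mpr (hQne.image _)
    exact this
  -- the ideal J of i-images of words of rank ≤ formerRank
  set J : Set (Matrix (Fin (nn i)) (Fin (nn i)) ℂ) :=
    {g | ∃ w : List A, theta δ e w i = g ∧ wordRank δ w ≤ formerRank δ} with hJdef
  have hJM : J ⊆ factorMonoid δ e i := by
    rintro g ⟨w, hw, _⟩
    exact ⟨w, hw⟩
  have hJideal : IsSetIdeal (factorMonoid δ e i) J := by
    refine ⟨hJM, ?_⟩
    rintro a ⟨z, rfl⟩ x ⟨w, rfl, hwr⟩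
    constructor
    · refine ⟨z ++ w, (theta_append δ e z w i), ?_⟩
      exact le_trans (wordRank_append_le_right δ z w) hwr
    · refine ⟨w ++ z, (theta_append δ e w z i), ?_⟩
      exact le_trans (wordRank_append_le_left δ w z) hwr
  obtain ⟨v0, hv0⟩ := hsync
  have hJ0 : (0 : Matrix (Fin (nn i)) (Fin (nn i)) ℂ) ∈ J := by
    refine ⟨v0, theta_eq_zero_of_reset δ e v0 hv0 i, ?_⟩
    have : wordRank δ v0 = 1 := hv0
    omega
  have hJne : J ≠ {0} := by
    intro h
    have : theta δ e u i ∈ J := ⟨u, rfl, le_of_eq hur⟩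
    rw [h] at this
    exact hθu this
  have hJfin : J.Finite := (factorMonoid_finite δ e i).subset hJM
  obtain ⟨K, hKJ, hKmin⟩ := exists_zeroMinimal (factorMonoid δ e i) J hJfin hJideal hJ0 hJne
  have hKI : K = Ii i := hIuniq i K hKmin
  obtain ⟨g, hgI, hg0⟩ := exists_ne_zero_of_ne_singleton (Ii i) (hIi i).2.1 (hIi i).2.2.1
  have hgJ : g ∈ J := hKJ (hKI ▸ hgI)
  obtain ⟨w, hwθ, hwr⟩ := hgJ
  have h2 : rnkElt δ e i g ≤ formerRank δ :=
    le_trans (Nat.sInf_le ⟨w, hwθ, rfl⟩) hwr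
  have h3 : rnkIdeal δ e i (Ii i) ≤ formerRank δ :=
    le_trans (Nat.sInf_le ⟨g, hgI, hg0, rfl⟩) h2
  have h4 : sInf (Set.range fun i : Fin k => rnkIdeal δ e i (Ii i)) ≤ formerRank δ :=
    le_trans (Nat.sInf_le ⟨i, rfl⟩) h3
  exact le_antisymm h4 part1

end
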